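/- Let R be a Noetherian local ring and M a finitely generated R-module with two finite free resolutions (F,ψ) and (E,φ), where (F,ψ) is minimal. Then (F,ψ) is isomorphic to a direct summand of (E,φ) as complexes: there exist morphisms of complexes i : F → E and p : E → F, both lifting the identity on M, with p ∘ i = id_F. -/

import Mathlib

section Helpers

variable {R : Type*} [CommRing R]

private theorem lift_through_range {P A B : Type*}
    [AddCommGroup P] [Module R P] [Module.Projective R P]
    [AddCommGroup A] [Module R A] [AddCommGroup B] [Module R B]
    (f : A →ₗ[R] B) (g : P →ₗ[R] B) (hg : ∀ x, g x ∈ LinearMap.range f) :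
    ∃ g' : P →ₗ[R] A, f.comp g' = g := by
  obtain ⟨g', hg'⟩ := Module.projective_lifting_property f.rangeRestrict
    (g.codRestrict (LinearMap.range f) hg) f.surjective_rangeRestrict
  refine ⟨g', ?_⟩
  ext x
  have := congrArg Subtype.val (LinearMap.congr_fun hg' x)
  simpa using this

private theorem chain_lift {M : Type*} [AddCommGroup M] [Module R M]
    {F E : ℕ → Type*}
    [∀ k, AddCommGroup (F k)] [∀ k, Module R (F k)] [∀ k, Module.Projective R (F k)]
    [∀ k, AddCommGroup (E k)] [∀ k, Module R (E k)]
    (ψ : ∀ k, F (k + 1) →ₗ[R] F k) (φ : ∀ k, E (k + 1) →ₗ[R] E k)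
    (hψ : ∀ k, (ψ k).comp (ψ (k + 1)) = 0)
    (πF : F 0 →ₗ[R] M) (hπFψ : πF.comp (ψ 0) = 0)
    (πE : E 0 →ₗ[R] M) (hπE : Function.Surjective πE)
    (hEcoker : LinearMap.ker πE = LinearMap.range (φ 0))
    (hEexact : ∀ k, LinearMap.ker (φ k) = LinearMap.range (φ (k + 1))) :
    ∃ i : ∀ k, F k →ₗ[R] E k,
      (∀ k, (φ k).comp (i (k + 1)) = (i k).comp (ψ k)) ∧ πE.comp (i 0) = πF := by
  classical
  set P : ∀ k, (F k →ₗ[R] E k) → Prop :=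
    fun k f => ∀ x, f (ψ k x) ∈ LinearMap.range (φ k) with hP
  obtain ⟨i0, hi0⟩ := Module.projective_lifting_property πE πF hπE
  have hP0 : P 0 i0 := by
    intro x
    rw [← hEcoker, LinearMap.mem_ker]
    have h1 : πE (i0 (ψ 0 x)) = πF (ψ 0 x) := LinearMap.congr_fun hi0 (ψ 0 x)
    have h2 : πF (ψ 0 x) = 0 := by simpa using LinearMap.congr_fun hπFψ x
    rw [h1, h2]
  have hstep : ∀ k (f : {f : F k →ₗ[R] E k // P k f}),
      ∃ f' : F (k + 1) →ₗ[R] E (k + 1),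
        P (k + 1) f' ∧ (φ k).comp f' = f.1.comp (ψ k) := by
    rintro k ⟨f, hf⟩
    obtain ⟨f', hf'⟩ := lift_through_range (φ k) (f.comp (ψ k)) (fun x => hf x)
    refine ⟨f', ?_, hf'⟩
    intro x
    rw [← hEexact k, LinearMap.mem_ker]
    have h1 : (φ k) (f' (ψ (k + 1) x)) = f (ψ k (ψ (k + 1) x)) :=
      LinearMap.congr_fun hf' _
    have h2 : ψ k (ψ (k + 1) x) = 0 := by simpa using LinearMap.congr_fun (hψ k) x
    rw [h1, h2, map_zero]
  choose step hstep1 hstep2 using hstep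
  let seq : ∀ k, {f : F k →ₗ[R] E k // P k f} :=
    fun k => Nat.rec ⟨i0, hP0⟩ (fun k fk => ⟨step k fk, hstep1 k fk⟩) k
  exact ⟨fun k => (seq k).1, fun k => hstep2 k (seq k), hi0⟩

private theorem homotopy_lift {M : Type*} [AddCommGroup M] [Module R M]
    {F : ℕ → Type*} [∀ k, AddCommGroup (F k)] [∀ k, Module R (F k)]
    [∀ k, Module.Projective R (F k)]
    (ψ : ∀ k, F (k + 1) →ₗ[R] F k)
    (hψ : ∀ k, (ψ k).comp (ψ (k + 1)) = 0)
    (πF : F 0 →ₗ[R] M)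
    (hFcoker : LinearMap.ker πF = LinearMap.range (ψ 0))
    (hFexact : ∀ k, LinearMap.ker (ψ k) = LinearMap.range (ψ (k + 1)))
    (g : ∀ k, F k →ₗ[R] F k)
    (hg : ∀ k, (ψ k).comp (g (k + 1)) = (g k).comp (ψ k))
    (hg0 : πF.comp (g 0) = 0) :
    ∃ h : ∀ k, F k →ₗ[R] F (k + 1),
      (ψ 0).comp (h 0) = g 0 ∧
      ∀ k, g (k + 1) = (ψ (k + 1)).comp (h (k + 1)) + (h k).comp (ψ k) := by
  classical
  set P : ∀ k, (F k →ₗ[R] F (k + 1)) → Prop :=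
    fun k hk => ∀ x : F (k + 1), g k (ψ k x) = ψ k (hk (ψ k x)) with hPdef
  obtain ⟨h0, hh0⟩ := lift_through_range (ψ 0) (g 0) (fun x => by
    rw [← hFcoker, LinearMap.mem_ker]
    simpa using LinearMap.congr_fun hg0 x)
  have hP0 : P 0 h0 := fun x => by
    have := LinearMap.congr_fun hh0 (ψ 0 x)
    simpa using this.symm
  have hstep : ∀ k (hk : {h : F k →ₗ[R] F (k + 1) // P k h}),
      ∃ h' : F (k + 1) →ₗ[R] F (k + 2),
        P (k + 1) h' ∧ (ψ (k + 1)).comp h' = g (k + 1) - hk.1.comp (ψ k) := by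
    rintro k ⟨hk, hkP⟩
    obtain ⟨h', hh'⟩ := lift_through_range (ψ (k + 1)) (g (k + 1) - hk.comp (ψ k))
      (fun x => by
        rw [← hFexact k, LinearMap.mem_ker]
        have h1 : (ψ k) (g (k + 1) x) = g k (ψ k x) := by
          simpa using LinearMap.congr_fun (hg k) x
        simp only [LinearMap.sub_apply, LinearMap.comp_apply, map_sub, h1]
        rw [hkP x, sub_self])
    refine ⟨h', ?_, hh'⟩
    intro x
    have h1 : ψ (k + 1) (h' (ψ (k + 1) x)) =
        g (k + 1) (ψ (k + 1) x) - hk (ψ k (ψ (k + 1) x)) := by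
      simpa using LinearMap.congr_fun hh' (ψ (k + 1) x)
    have h2 : ψ k (ψ (k + 1) x) = 0 := by simpa using LinearMap.congr_fun (hψ k) x
    rw [h1, h2, map_zero, sub_zero]
  choose step hstep1 hstep2 using hstep
  let seq : ∀ k, {h : F k →ₗ[R] F (k + 1) // P k h} :=
    fun k => Nat.rec ⟨h0, hP0⟩ (fun k hk => ⟨step k hk, hstep1 k hk⟩) k
  refine ⟨fun k => (seq k).1, hh0, fun k => ?_⟩
  show g (k + 1) = (ψ (k + 1)).comp (step k (seq k)) + ((seq k).1).comp (ψ k)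
  rw [hstep2 k (seq k), sub_add_cancel]

end Helpers

/-- Over a Noetherian local ring `(R, m)`, a minimal free resolution `(F, ψ)`
of a finitely generated module `M` is a direct summand of any finite free
resolution `(E, φ)` of `M`: there exist morphisms of complexes `i : F → E`
and `p : E → F`, both lifting the identity on `M` (via the augmentations
`πF`, `πE`), with `p ∘ i = id_F`. -/
theorem minimal_resolution_direct_summand
    (R : Type*) [CommRing R] [IsNoetherianRing R] [IsLocalRing R]
    (M : Type*) [AddCommGroup M] [Module R M] [Module.Finite R M]
    (F E : ℕ → Type*)
    [∀ k, AddCommGroup (F k)] [∀ k, Module R (F k)]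
    [∀ k, Module.Free R (F k)] [∀ k, Module.Finite R (F k)]
    [∀ k, AddCommGroup (E k)] [∀ k, Module R (E k)]
    [∀ k, Module.Free R (E k)] [∀ k, Module.Finite R (E k)]
    (ψ : ∀ k, F (k + 1) →ₗ[R] F k)
    (φ : ∀ k, E (k + 1) →ₗ[R] E k)
    (hψ : ∀ k, (ψ k).comp (ψ (k + 1)) = 0)
    (hφ : ∀ k, (φ k).comp (φ (k + 1)) = 0)
    (πF : F 0 →ₗ[R] M) (hπF : Function.Surjective πF)
    (hFcoker : LinearMap.ker πF = LinearMap.range (ψ 0))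
    (hFexact : ∀ k, LinearMap.ker (ψ k) = LinearMap.range (ψ (k + 1)))
    (πE : E 0 →ₗ[R] M) (hπE : Function.Surjective πE)
    (hEcoker : LinearMap.ker πE = LinearMap.range (φ 0))
    (hEexact : ∀ k, LinearMap.ker (φ k) = LinearMap.range (φ (k + 1)))
    (hFmin : ∀ k, ∀ x : F (k + 1), ψ k x ∈
      (IsLocalRing.maximalIdeal R) • (⊤ : Submodule R (F k))) :
    ∃ (i : ∀ k, F k →ₗ[R] E k) (p : ∀ k, E k →ₗ[R] F k),
      (∀ k, (φ k).comp (i (k + 1)) = (i k).comp (ψ k)) ∧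
      (∀ k, (ψ k).comp (p (k + 1)) = (p k).comp (φ k)) ∧
      πE.comp (i 0) = πF ∧ πF.comp (p 0) = πE ∧
      ∀ k, (p k).comp (i k) = LinearMap.id := by
  classical
  have hπFψ : πF.comp (ψ 0) = 0 := by
    ext x
    have : ψ 0 x ∈ LinearMap.ker πF := by
      rw [hFcoker]; exact LinearMap.mem_range_self _ x
    simpa using this
  have hπEφ : πE.comp (φ 0) = 0 := by
    ext x
    have : φ 0 x ∈ LinearMap.ker πE := by
      rw [hEcoker]; exact LinearMap.mem_range_self _ x
    simpa using this
  obtain ⟨i, hichain, hi0⟩ := chain_lift ψ φ hψ πF hπFψ πE hπE hEcoker hEexact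
  obtain ⟨p, hpchain, hp0⟩ := chain_lift φ ψ hφ πE hπEφ πF hπF hFcoker hFexact
  -- pointwise versions
  have hic : ∀ k x, φ k (i (k + 1) x) = i k (ψ k x) :=
    fun k x => by simpa using LinearMap.congr_fun (hichain k) x
  have hpc : ∀ k x, ψ k (p (k + 1) x) = p k (φ k x) :=
    fun k x => by simpa using LinearMap.congr_fun (hpchain k) x
  have hi0' : ∀ x, πE (i 0 x) = πF x := fun x => LinearMap.congr_fun hi0 x
  have hp0' : ∀ x, πF (p 0 x) = πE x := fun x => LinearMap.congr_fun hp0 x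
  set a : ∀ k, F k →ₗ[R] F k := fun k => (p k).comp (i k) with ha
  have hac : ∀ k x, ψ k (a (k + 1) x) = a k (ψ k x) := by
    intro k x
    show ψ k (p (k + 1) (i (k + 1) x)) = p k (i k (ψ k x))
    rw [hpc, hic]
  -- the chain map g = a - id lifts 0
  set g : ∀ k, F k →ₗ[R] F k := fun k => a k - LinearMap.id with hgdef
  have hgchain : ∀ k, (ψ k).comp (g (k + 1)) = (g k).comp (ψ k) := by
    intro k
    ext x
    simp only [hgdef, LinearMap.comp_apply, LinearMap.sub_apply, LinearMap.id_apply,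
      map_sub]
    rw [hac]
  have hg0 : πF.comp (g 0) = 0 := by
    ext x
    simp only [hgdef, LinearMap.comp_apply, LinearMap.sub_apply, LinearMap.id_apply,
      map_sub, LinearMap.zero_apply]
    show πF (p 0 (i 0 x)) - πF x = 0
    rw [hp0', hi0', sub_self]
  obtain ⟨h, hh0, hhs⟩ := homotopy_lift ψ hψ πF hFcoker hFexact g hgchain hg0
  -- g k maps into m • ⊤
  have hmem : ∀ k (x : F k),
      a k x - x ∈ (IsLocalRing.maximalIdeal R) • (⊤ : Submodule R (F k)) := by
    intro k
    cases k with
    | zero =>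
      intro x
      have h1 : a 0 x - x = ψ 0 (h 0 x) := by
        have := LinearMap.congr_fun hh0 x
        simpa [hgdef] using this.symm
      rw [h1]
      exact hFmin 0 (h 0 x)
    | succ k =>
      intro x
      have h1 : a (k + 1) x - x = ψ (k + 1) (h (k + 1) x) + h k (ψ k x) := by
        have := LinearMap.congr_fun (hhs k) x
        simpa [hgdef] using this
      rw [h1]
      refine Submodule.add_mem _ (hFmin (k + 1) (h (k + 1) x)) ?_
      have h2 := Submodule.mem_map_of_mem (f := h k) (hFmin k x)
      rw [Submodule.map_smul''] at h2
      exact SetLike.le_def.mp (smul_mono_right (IsLocalRing.maximalIdeal R) le_top) h2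
  have hsurj : ∀ k, Function.Surjective (a k) := by
    intro k
    rw [← LinearMap.range_eq_top]
    refine top_le_iff.mp ?_
    refine Submodule.le_of_le_smul_of_le_jacobson_bot
      (Module.finite_def.mp inferInstance) (IsLocalRing.maximalIdeal_le_jacobson ⊥) ?_
    intro x _
    refine Submodule.mem_sup.mpr ⟨a k x, LinearMap.mem_range_self _ x, x - a k x, ?_, ?_⟩
    · have := Submodule.neg_mem _ (hmem k x)
      simpa using this
    · abel
  have hbij : ∀ k, Function.Bijective (a k) := fun k =>
    ⟨OrzechProperty.injective_of_surjective_endomorphism _ (hsurj k), hsurj k⟩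
  set q : ∀ k, F k ≃ₗ[R] F k := fun k => LinearEquiv.ofBijective (a k) (hbij k) with hq
  have haq : ∀ k (y : F k), a k ((q k).symm y) = y := fun k y => by
    simpa only [hq, LinearEquiv.ofBijective_apply] using (q k).apply_symm_apply y
  have hqa : ∀ k (x : F k), (q k).symm (a k x) = x := fun k x => by
    simpa only [hq, LinearEquiv.ofBijective_apply] using (q k).symm_apply_apply x
  have hqsymm : ∀ k (z : F (k + 1)), ψ k ((q (k + 1)).symm z) = (q k).symm (ψ k z) := by
    intro k z
    apply (hbij k).1
    rw [haq, ← hac, haq]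
  refine ⟨i, fun k => ((q k).symm : F k ≃ₗ[R] F k).toLinearMap.comp (p k),
    hichain, ?_, hi0, ?_, ?_⟩
  · intro k
    ext z
    simp only [LinearMap.comp_apply, LinearEquiv.coe_coe]
    rw [hqsymm, hpc]
  · ext z
    simp only [LinearMap.comp_apply, LinearEquiv.coe_coe]
    have h1 : πF ((q 0).symm (p 0 z)) = πF (a 0 ((q 0).symm (p 0 z))) := by
      show πF _ = πF (p 0 (i 0 _))
      rw [hp0', hi0']
    rw [h1, haq, hp0']
  · intro k
    ext x
    simp only [LinearMap.comp_apply, LinearEquiv.coe_coe, LinearMap.id_apply]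
    exact hqa k x
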